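/- A binary relation ⪰ on a closed, mixture-closed set C of Anscombe–Aumann acts over a finite set A of prizes satisfies extended mixture cancellation and has closed graph if and only if it has a constructive subjective-expected-utility representation with a single utility function: there exist a finite nonempty state space S', a finite nonempty outcome space O', a map h : S' → S, a map g : S' × A → O', a function u : O' → ℝ, and a nonempty closed set P of probability distributions p : S' → [0,1] (with ∑_{s'∈S'} p(s') = 1) such that for all a, b ∈ C: a ⪰ b if and only if for every p ∈ P, ∑_{s'∈S'} p(s')·∑_{c∈A} a(h(s'))(c)·u(g(s', c)) ≥ ∑_{s'∈S'} p(s')·∑_{c∈A} b(h(s'))(c)·u(g(s', c)). Moreover, if ⪰ is in addition complete (for all a, b ∈ C, a ⪰ b or b ⪰ a), then P can be chosen to be a singleton. -/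

import Mathlib

/-- An Anscombe–Aumann act over prizes `A`: a map assigning to each state a probability
vector over prizes. -/
def IsAAAct {S A : Type*} [Fintype A] (a : S → A → ℝ) : Prop :=
  ∀ s, (∀ c, 0 ≤ a s c) ∧ (∑ c, a s c = 1)

/-- Extended mixture cancellation for a relation on a subset of a real vector space. -/
def ExtMixCancel {V : Type*} [AddCommGroup V] [Module ℝ V]
    (C : Set V) (R : V → V → Prop) : Prop :=
  ∀ (n : ℕ) (a b : Fin (n + 1) → V),
    (∀ i, a i ∈ C) → (∀ i, b i ∈ C) →
    (∑ i, a i = ∑ i, b i) →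
    (∃ k, k ≤ n ∧ (∀ i : Fin (n + 1), (i : ℕ) < k → R (a i) (b i)) ∧
      (∀ i : Fin (n + 1), k ≤ (i : ℕ) → a i = a (Fin.last n) ∧ b i = b (Fin.last n))) →
    R (b (Fin.last n)) (a (Fin.last n))

/-- The graph `{(a, b) ∈ C × C : a ⪰ b}` is closed. -/
def ClosedGraphOn {V : Type*} [TopologicalSpace V] (C : Set V) (R : V → V → Prop) : Prop :=
  IsClosed {p : V × V | p.1 ∈ C ∧ p.2 ∈ C ∧ R p.1 p.2}


open Finset
namespace SEUHelp
set_option maxHeartbeats 1000000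
set_option linter.unusedSectionVars false
variable {S A : Type*} [Fintype S] [Fintype A]

variable (C : Set (S → A → ℝ)) (R : (S → A → ℝ) → (S → A → ℝ) → Prop)

def grph : Set ((S → A → ℝ) × (S → A → ℝ)) := {q | q.1 ∈ C ∧ q.2 ∈ C ∧ R q.1 q.2}

def Dset : Set (S → A → ℝ) := (fun q => q.1 - q.2) '' grph C R


variable {C R}

theorem refl_of_emc (hE : ExtMixCancel C R) {a : S → A → ℝ} (ha : a ∈ C) : R a a := by
  have := hE 0 (fun _ => a) (fun _ => a) (fun _ => ha) (fun _ => ha) rfl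
    ⟨0, le_refl 0, fun i hi => absurd hi (by omega), fun i _ => ⟨rfl, rfl⟩⟩
  exact this

def padSeq {α : Type*} (k m : ℕ) (u : Fin k → α) (c : α) : Fin (k + m) → α :=
  Fin.addCases u (fun _ => c)

theorem padSeq_lt {α : Type*} {k : ℕ} (m : ℕ) (u : Fin k → α) (c : α) (i : Fin (k + m))
    (h : (i : ℕ) < k) : padSeq k m u c i = u ⟨(i : ℕ), h⟩ := by
  have hi : i = Fin.castAdd m ⟨(i : ℕ), h⟩ := by apply Fin.ext; simp
  conv_lhs => rw [hi]
  exact Fin.addCases_left _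

theorem padSeq_ge {α : Type*} {k : ℕ} (m : ℕ) (u : Fin k → α) (c : α) (i : Fin (k + m))
    (h : k ≤ (i : ℕ)) : padSeq k m u c i = c := by
  have hlt : (i : ℕ) - k < m := by have := i.isLt; omega
  have hi : i = Fin.natAdd k ⟨(i : ℕ) - k, hlt⟩ := by apply Fin.ext; simp; omega
  conv_lhs => rw [hi]
  exact Fin.addCases_right _

theorem padSeq_sum {α : Type*} [AddCommMonoid α] (k m : ℕ) (u : Fin k → α) (c : α) :
    ∑ i, padSeq k m u c i = ∑ i, u i + m • c := by
  rw [Fin.sum_univ_add]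
  simp [padSeq, Fin.addCases_left, Fin.addCases_right]

/-- If `∑ u i + m • b = ∑ v i + m • a` with `R (u i) (v i)` pairs, then `R a b`. -/
theorem cancel_sum (hE : ExtMixCancel C R) {k m' : ℕ} (u v : Fin k → (S → A → ℝ))
    (hu : ∀ i, u i ∈ C) (hv : ∀ i, v i ∈ C) (hR : ∀ i, R (u i) (v i))
    {a b : S → A → ℝ} (ha : a ∈ C) (hb : b ∈ C)
    (hsum : ∑ i, u i + (m' + 1 : ℕ) • b = ∑ i, v i + (m' + 1 : ℕ) • a) : R a b := by
  have hlast : k ≤ ((Fin.last (k + m') : Fin (k + m' + 1)) : ℕ) := by simp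
  have main := hE (k + m') (padSeq k (m' + 1) u b) (padSeq k (m' + 1) v a)
    (by
      intro i
      rcases lt_or_ge ((i : ℕ)) k with h | h
      · have e := padSeq_lt (m' + 1) u b i h; rw [e]; exact hu _
      · have e := padSeq_ge (m' + 1) u b i h; rw [e]; exact hb)
    (by
      intro i
      rcases lt_or_ge ((i : ℕ)) k with h | h
      · have e := padSeq_lt (m' + 1) v a i h; rw [e]; exact hv _
      · have e := padSeq_ge (m' + 1) v a i h; rw [e]; exact ha)
    (by
      show (∑ i : Fin (k + (m' + 1)), padSeq k (m' + 1) u b i)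
        = (∑ i : Fin (k + (m' + 1)), padSeq k (m' + 1) v a i)
      rw [padSeq_sum, padSeq_sum]; exact hsum)
    (by
      refine ⟨k, by omega, ?_, ?_⟩
      · intro i hi
        have e1 := padSeq_lt (m' + 1) u b i hi
        have e2 := padSeq_lt (m' + 1) v a i hi
        rw [e1, e2]
        exact hR _
      · intro i hi
        have e1 := padSeq_ge (m' + 1) u b i hi
        have e2 := padSeq_ge (m' + 1) v a i hi
        have e3 := padSeq_ge (m' + 1) u b (Fin.last (k + m')) hlast
        have e4 := padSeq_ge (m' + 1) v a (Fin.last (k + m')) hlast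
        rw [e1, e2, e3, e4]
        exact ⟨rfl, rfl⟩)
  have e3 := padSeq_ge (m' + 1) u b (Fin.last (k + m')) hlast
  have e4 := padSeq_ge (m' + 1) v a (Fin.last (k + m')) hlast
  rwa [e3, e4] at main

/-- `R` depends only on differences; membership in `Dset` gives `R`. -/
theorem r_of_mem_D (hE : ExtMixCancel C R) {a b : S → A → ℝ} (ha : a ∈ C) (hb : b ∈ C)
    (hd : a - b ∈ Dset C R) : R a b := by
  obtain ⟨⟨x, y⟩, ⟨hx, hy, hR⟩, hxy⟩ := hd
  refine cancel_sum hE (k := 1) (m' := 0) (fun _ => x) (fun _ => y)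
    (fun _ => hx) (fun _ => hy) (fun _ => hR) ha hb ?_
  simp only [Fin.sum_univ_one, zero_add, one_smul]
  have h1 : x - y = a - b := hxy
  have h2 : x + b = a + y := sub_eq_sub_iff_add_eq_add.mp h1
  rw [h2]; exact add_comm a y

theorem mem_D_of_r {a b : S → A → ℝ} (ha : a ∈ C) (hb : b ∈ C) (hr : R a b) :
    a - b ∈ Dset C R := ⟨(a, b), ⟨ha, hb, hr⟩, rfl⟩

def dot (w x : S → A → ℝ) : ℝ := ∑ s, ∑ c, w s c * x s c

def dotL (w : S → A → ℝ) : (S → A → ℝ) →ₗ[ℝ] ℝ where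
  toFun x := dot w x
  map_add' x y := by simp [dot, mul_add, Finset.sum_add_distrib]
  map_smul' r x := by
    simp only [dot, Pi.smul_apply, smul_eq_mul, RingHom.id_apply, Finset.mul_sum]
    congr 1; ext s; congr 1; ext c; ring

theorem dot_comm (w x : S → A → ℝ) : dot w x = dot x w := by
  simp [dot, mul_comm]

theorem dot_sub (w x y : S → A → ℝ) : dot w (x - y) = dot w x - dot w y := by
  exact (dotL w).map_sub x y

theorem dot_smul (w : S → A → ℝ) (r : ℝ) (x : S → A → ℝ) : dot w (r • x) = r * dot w x := by
  exact (dotL w).map_smul r x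

theorem dot_neg (w x : S → A → ℝ) : dot w (-x) = - dot w x := by
  exact (dotL w).map_neg x

theorem continuous_dot (w : S → A → ℝ) : Continuous (fun x => dot w x) :=
  (dotL w).continuous_of_finiteDimensional

theorem continuous_dot' (x : S → A → ℝ) : Continuous (fun w => dot w x) := by
  have : (fun w : S → A → ℝ => dot w x) = fun w => dot x w := by
    ext w; exact dot_comm w x
  rw [this]; exact continuous_dot x


def coneD (C : Set (S → A → ℝ)) (R : (S → A → ℝ) → (S → A → ℝ) → Prop) :
    Set (S → A → ℝ) := {x | ∃ t : ℝ, 0 ≤ t ∧ ∃ d ∈ Dset C R, x = t • d}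

theorem isCompact_C (hAA : ∀ a ∈ C, IsAAAct a) (hclosedC : IsClosed C) : IsCompact C := by
  have hbox : IsCompact (Set.pi (Set.univ : Set S)
      (fun _ => Set.pi (Set.univ : Set A) (fun _ => Set.Icc (0:ℝ) 1))) :=
    isCompact_univ_pi (fun _ => isCompact_univ_pi (fun _ => isCompact_Icc))
  refine hbox.of_isClosed_subset hclosedC ?_
  intro a ha
  refine Set.mem_univ_pi.mpr fun s => Set.mem_univ_pi.mpr fun c => ?_
  obtain ⟨hpos, hsum⟩ := hAA a ha s
  refine ⟨hpos c, ?_⟩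
  calc a s c ≤ ∑ c', a s c' := Finset.single_le_sum (fun c' _ => hpos c') (mem_univ c)
  _ = 1 := hsum

theorem isCompact_D (hAA : ∀ a ∈ C, IsAAAct a) (hclosedC : IsClosed C)
    (hCG : ClosedGraphOn C R) : IsCompact (Dset C R) := by
  have hC := isCompact_C hAA hclosedC
  have hgr : IsCompact (grph C R) := by
    refine (hC.prod hC).of_isClosed_subset hCG ?_
    intro q hq
    exact ⟨hq.1, hq.2.1⟩
  exact hgr.image (continuous_fst.sub continuous_snd)

theorem smul_mem_D (hE : ExtMixCancel C R)
    (hmix : ∀ a ∈ C, ∀ b ∈ C, ∀ r : ℝ, 0 ≤ r → r ≤ 1 → r • a + (1 - r) • b ∈ C)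
    (hDcl : IsClosed (Dset C R)) {d : S → A → ℝ} (hd : d ∈ Dset C R)
    {t : ℝ} (ht0 : 0 ≤ t) (ht1 : t ≤ 1) : t • d ∈ Dset C R := by
  obtain ⟨⟨x, y⟩, ⟨hx, hy, hRxy⟩, hxy⟩ := hd
  have hxy : x - y = d := hxy
  -- rational case
  have hrat : ∀ p q : ℕ, p ≤ q + 1 → ((p : ℝ) / (q + 1)) • d ∈ Dset C R := by
    intro p q hpq
    set r : ℝ := (p : ℝ) / (q + 1) with hr
    have hq0 : ((q : ℝ) + 1) ≠ 0 := by positivity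
    have hr0 : 0 ≤ r := by positivity
    have hr1 : r ≤ 1 := by
      rw [hr, div_le_one (by positivity)]
      exact_mod_cast (by exact_mod_cast hpq : (p : ℝ) ≤ (q : ℝ) + 1)
    have haC : r • x + (1 - r) • y ∈ C := hmix x hx y hy r hr0 hr1
    have hRab : R (r • x + (1 - r) • y) y := by
      refine cancel_sum hE (k := p) (m' := q) (fun _ => x) (fun _ => y)
        (fun _ => hx) (fun _ => hy) (fun _ => hRxy) haC hy ?_
      simp only [Finset.sum_const, Finset.card_univ, Fintype.card_fin]
      rw [← Nat.cast_smul_eq_nsmul ℝ p x, ← Nat.cast_smul_eq_nsmul ℝ p y,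
        ← Nat.cast_smul_eq_nsmul ℝ (q + 1) y, ← Nat.cast_smul_eq_nsmul ℝ (q + 1) (r • x + (1 - r) • y)]
      push_cast
      match_scalars <;> rw [hr] <;> field_simp <;> ring
    have : (r • x + (1 - r) • y) - y = r • d := by
      rw [← hxy]; module
    rw [← this]
    exact mem_D_of_r haC hy hRab
  -- real case via closure
  rcases eq_or_lt_of_le ht0 with h0 | h0
  · -- t = 0 : use p = 0
    have := hrat 0 0 (by omega)
    simpa [← h0] using this
  · have hseq : ∀ j : ℕ, (((⌊t * (j + 1)⌋₊ : ℝ) / (j + 1)) • d) ∈ Dset C R := by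
      intro j
      apply hrat
      have h1 : t * (j + 1) ≤ (j + 1 : ℝ) := by nlinarith
      calc ⌊t * (j + 1)⌋₊ ≤ ⌊((j:ℝ) + 1)⌋₊ := Nat.floor_le_floor h1
      _ = j + 1 := by exact_mod_cast Nat.floor_natCast (j+1)
    have htend : Filter.Tendsto (fun j : ℕ => ((⌊t * (j + 1)⌋₊ : ℝ) / (j + 1)))
        Filter.atTop (nhds t) := by
      have hdist : ∀ j : ℕ, |((⌊t * (j + 1)⌋₊ : ℝ) / (j + 1)) - t| ≤ 1 / (j + 1) := by
        intro j
        have hj0 : (0:ℝ) < (j:ℝ) + 1 := by positivity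
        have hfl : (⌊t * (j + 1)⌋₊ : ℝ) ≤ t * (j + 1) := Nat.floor_le (by positivity)
        have hfl2 : t * (j + 1) < (⌊t * (j + 1)⌋₊ : ℝ) + 1 := Nat.lt_floor_add_one _
        have e1 : (⌊t * (j + 1)⌋₊ : ℝ) / ((j:ℝ) + 1) ≤ t := by
          rw [div_le_iff₀ hj0]; linarith
        have e2 : t - 1 / ((j:ℝ) + 1) ≤ (⌊t * (j + 1)⌋₊ : ℝ) / ((j:ℝ) + 1) := by
          rw [sub_le_iff_le_add, ← add_div, le_div_iff₀ hj0]
          linarith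
        rw [abs_le]
        constructor <;> linarith
      rw [tendsto_iff_dist_tendsto_zero]
      simp only [Real.dist_eq]
      exact squeeze_zero (fun j => abs_nonneg _) hdist tendsto_one_div_add_atTop_nhds_zero_nat
    have : Filter.Tendsto (fun j : ℕ => ((⌊t * (j + 1)⌋₊ : ℝ) / (j + 1)) • d)
        Filter.atTop (nhds (t • d)) := htend.smul tendsto_const_nhds
    exact hDcl.mem_of_tendsto this (Filter.Eventually.of_forall hseq)


theorem zero_mem_D (hE : ExtMixCancel C R) {a : S → A → ℝ} (ha : a ∈ C) :
    (0 : S → A → ℝ) ∈ Dset C R := by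
  have : a - a = (0 : S → A → ℝ) := by abel
  rw [← this]
  exact mem_D_of_r ha ha (refl_of_emc hE ha)

theorem convex_D (hE : ExtMixCancel C R)
    (hmix : ∀ a ∈ C, ∀ b ∈ C, ∀ r : ℝ, 0 ≤ r → r ≤ 1 → r • a + (1 - r) • b ∈ C)
    (hDcl : IsClosed (Dset C R)) : Convex ℝ (Dset C R) := by
  intro d1 hd1 d2 hd2 μ ν hμ hν hμν
  have hν' : ν = 1 - μ := by linarith
  have hμ1 : μ ≤ 1 := by linarith
  obtain ⟨⟨x1, y1⟩, ⟨hx1, hy1, hR1⟩, h1⟩ := hd1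
  obtain ⟨⟨x2, y2⟩, ⟨hx2, hy2, hR2⟩, h2⟩ := hd2
  have h1 : x1 - y1 = d1 := h1
  have h2 : x2 - y2 = d2 := h2
  have haC : μ • x1 + ν • x2 ∈ C := by rw [hν']; exact hmix x1 hx1 x2 hx2 μ hμ hμ1
  have hbC : μ • y1 + ν • y2 ∈ C := by rw [hν']; exact hmix y1 hy1 y2 hy2 μ hμ hμ1
  have he1 : μ • d1 ∈ Dset C R := smul_mem_D hE hmix hDcl ⟨(x1,y1),⟨hx1,hy1,hR1⟩,h1⟩ hμ hμ1
  have he2 : ν • d2 ∈ Dset C R := smul_mem_D hE hmix hDcl ⟨(x2,y2),⟨hx2,hy2,hR2⟩,h2⟩ hν (by linarith)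
  obtain ⟨⟨u1, v1⟩, ⟨hu1, hv1, hRu1⟩, hh1⟩ := he1
  obtain ⟨⟨u2, v2⟩, ⟨hu2, hv2, hRu2⟩, hh2⟩ := he2
  have hh1 : u1 - v1 = μ • d1 := hh1
  have hh2 : u2 - v2 = ν • d2 := hh2
  have hRab : R (μ • x1 + ν • x2) (μ • y1 + ν • y2) := by
    refine cancel_sum hE (k := 2) (m' := 0) ![u1, u2] ![v1, v2]
      (fun i => by fin_cases i <;> assumption)
      (fun i => by fin_cases i <;> assumption)
      (fun i => by fin_cases i <;> assumption) haC hbC ?_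
    simp only [Fin.sum_univ_two, Matrix.cons_val_zero, Matrix.cons_val_one, Matrix.head_cons,
      one_smul, zero_add]
    have : u1 + u2 - (v1 + v2) = (μ • x1 + ν • x2) - (μ • y1 + ν • y2) := by
      have : u1 + u2 - (v1 + v2) = (u1 - v1) + (u2 - v2) := by abel
      rw [this, hh1, hh2, ← h1, ← h2]
      module
    have h3 : u1 + u2 = (u1 + u2 - (v1 + v2)) + (v1 + v2) := by abel
    rw [h3, this]
    abel
  have : (μ • x1 + ν • x2) - (μ • y1 + ν • y2) = μ • d1 + ν • d2 := by
    rw [← h1, ← h2]; module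
  rw [← this]
  exact mem_D_of_r haC hbC hRab

theorem D_subset_coneD {C : Set (S → A → ℝ)} {R : (S → A → ℝ) → (S → A → ℝ) → Prop} :
    Dset C R ⊆ coneD C R := fun d hd => ⟨1, zero_le_one, d, hd, (one_smul _ _).symm⟩

theorem smul_mem_coneD {x : S → A → ℝ} (hx : x ∈ coneD C R) {s : ℝ} (hs : 0 ≤ s) :
    s • x ∈ coneD C R := by
  obtain ⟨t, ht, d, hd, rfl⟩ := hx
  exact ⟨s * t, mul_nonneg hs ht, d, hd, (smul_smul s t d)⟩

theorem add_mem_coneD (hDconv : Convex ℝ (Dset C R)) {x y : S → A → ℝ}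
    (hx : x ∈ coneD C R) (hy : y ∈ coneD C R) : x + y ∈ coneD C R := by
  obtain ⟨t1, ht1, d1, hd1, rfl⟩ := hx
  obtain ⟨t2, ht2, d2, hd2, rfl⟩ := hy
  rcases eq_or_lt_of_le (by positivity : (0:ℝ) ≤ t1 + t2) with hT | hT
  · have ht1' : t1 = 0 := by linarith
    have ht2' : t2 = 0 := by linarith
    refine ⟨0, le_refl 0, d1, hd1, ?_⟩
    rw [ht1', ht2']; simp
  · refine ⟨t1 + t2, le_of_lt hT, (t1/(t1+t2)) • d1 + (t2/(t1+t2)) • d2, ?_, ?_⟩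
    · refine hDconv hd1 hd2 (by positivity) (by positivity) ?_
      field_simp
    · rw [smul_add, smul_smul, smul_smul]
      congr 1 <;> (congr 1; field_simp)

theorem convex_coneD (hDconv : Convex ℝ (Dset C R)) : Convex ℝ (coneD C R) := by
  intro x hx y hy μ ν hμ hν _
  exact add_mem_coneD hDconv (smul_mem_coneD hx hμ) (smul_mem_coneD hy hν)

/-- Cone membership of the difference implies the relation. -/
theorem r_of_mem_coneD (hE : ExtMixCancel C R)
    (hmix : ∀ a ∈ C, ∀ b ∈ C, ∀ r : ℝ, 0 ≤ r → r ≤ 1 → r • a + (1 - r) • b ∈ C)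
    (hDcl : IsClosed (Dset C R)) {a b : S → A → ℝ} (ha : a ∈ C) (hb : b ∈ C)
    (hc : a - b ∈ coneD C R) : R a b := by
  obtain ⟨t, ht, d, hd, hab⟩ := hc
  rcases eq_or_lt_of_le ht with h0 | h0
  · have : a - b = 0 := by rw [hab, ← h0]; simp
    have : a = b := by
      have := sub_eq_zero.mp this; exact this
    rw [this]; exact refl_of_emc hE hb
  · set k := ⌈t⌉₊ with hk
    have hk1 : 1 ≤ k := Nat.one_le_ceil_iff.mpr h0
    have hkpos : (0:ℝ) < (k:ℝ) := by exact_mod_cast hk1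
    have htk : t / k ≤ 1 := by
      rw [div_le_one hkpos]
      exact Nat.le_ceil t
    have he : (t / k) • d ∈ Dset C R := smul_mem_D hE hmix hDcl hd (by positivity) htk
    obtain ⟨⟨xe, ye⟩, ⟨hxe, hye, hRe⟩, hhe⟩ := he
    have hhe : xe - ye = (t / k) • d := hhe
    refine cancel_sum hE (k := k) (m' := 0) (fun _ => xe) (fun _ => ye)
      (fun _ => hxe) (fun _ => hye) (fun _ => hRe) ha hb ?_
    simp only [Finset.sum_const, Finset.card_univ, Fintype.card_fin, one_smul, zero_add]
    rw [← Nat.cast_smul_eq_nsmul ℝ k xe, ← Nat.cast_smul_eq_nsmul ℝ k ye]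
    have key : (k:ℝ) • xe - (k:ℝ) • ye = a - b := by
      have : (k:ℝ) • xe - (k:ℝ) • ye = (k:ℝ) • (xe - ye) := by module
      rw [this, hhe, hab, smul_smul]
      congr 1
      field_simp
    have h3 : (k:ℝ) • xe = ((k:ℝ) • xe - (k:ℝ) • ye) + (k:ℝ) • ye := by abel
    rw [h3, key]
    abel

theorem conic_sum_mem (hDconv : Convex ℝ (Dset C R)) (h0 : (0 : S → A → ℝ) ∈ coneD C R)
    {ι : Type*} (s : Finset ι) (w : ι → ℝ) (f : ι → (S → A → ℝ))
    (hw : ∀ i ∈ s, 0 ≤ w i) (hf : ∀ i ∈ s, f i ∈ coneD C R) :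
    ∑ i ∈ s, w i • f i ∈ coneD C R := by
  classical
  induction s using Finset.induction_on with
  | empty => simpa using h0
  | @insert a s hnotmem ih =>
    rw [Finset.sum_insert hnotmem]
    exact add_mem_coneD hDconv
      (smul_mem_coneD (hf a (Finset.mem_insert_self a s)) (hw a (Finset.mem_insert_self a s)))
      (ih (fun i hi => hw i (Finset.mem_insert_of_mem hi))
          (fun i hi => hf i (Finset.mem_insert_of_mem hi)))

theorem r_of_mem_closure_coneD (hE : ExtMixCancel C R)
    (hmix : ∀ a ∈ C, ∀ b ∈ C, ∀ r : ℝ, 0 ≤ r → r ≤ 1 → r • a + (1 - r) • b ∈ C)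
    (hAA : ∀ a ∈ C, IsAAAct a) (hclosedC : IsClosed C) (hCG : ClosedGraphOn C R)
    {a b : S → A → ℝ} (ha : a ∈ C) (hb : b ∈ C)
    (hc : a - b ∈ closure (coneD C R)) : R a b := by
  classical
  have hDcl : IsClosed (Dset C R) := (isCompact_D hAA hclosedC hCG).isClosed
  have hDconv : Convex ℝ (Dset C R) := convex_D hE hmix hDcl
  have h0D : (0 : S → A → ℝ) ∈ Dset C R := zero_mem_D hE ha
  have h0cone : (0 : S → A → ℝ) ∈ coneD C R := D_subset_coneD h0D
  obtain ⟨T, hTsub, hTspan, hTli⟩ := exists_linearIndependent ℝ (Dset C R)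
  have hTfin : T.Finite := hTli.setFinite
  haveI : Fintype ↥T := hTfin.fintype
  set V0 := Submodule.span ℝ (Set.range (Subtype.val : T → (S → A → ℝ))) with hV0
  have hV0D : V0 = Submodule.span ℝ (Dset C R) := by rw [hV0, Subtype.range_val]; exact hTspan
  have hcone_sub : coneD C R ⊆ (V0 : Set (S → A → ℝ)) := by
    rintro x ⟨t, ht, d, hd, rfl⟩
    exact Submodule.smul_mem _ _ (by rw [hV0D]; exact Submodule.subset_span hd)
  have hV0closed : IsClosed (V0 : Set (S → A → ℝ)) := Submodule.closed_of_finiteDimensional V0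
  have hclosure_sub : closure (coneD C R) ⊆ (V0 : Set (S → A → ℝ)) :=
    closure_minimal hcone_sub hV0closed
  by_cases hTne : T = ∅
  · have hzero : ∀ x ∈ coneD C R, x = (0 : S → A → ℝ) := by
      rintro x ⟨t, ht, d, hd, rfl⟩
      have hdspan : d ∈ Submodule.span ℝ T := hTspan ▸ Submodule.subset_span hd
      rw [hTne, Submodule.span_empty, Submodule.mem_bot] at hdspan
      rw [hdspan]; simp
    have hsub : coneD C R ⊆ ({0} : Set (S → A → ℝ)) := fun x hx => hzero x hx
    have hab0 : a - b ∈ ({0} : Set (S → A → ℝ)) :=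
      closure_minimal hsub isClosed_singleton hc
    have : a = b := by
      have := Set.mem_singleton_iff.mp hab0
      exact sub_eq_zero.mp this
    rw [this]; exact refl_of_emc hE hb
  · have hTnonempty : T.Nonempty := Set.nonempty_iff_ne_empty.mpr hTne
    haveI : Nonempty ↥T := Set.Nonempty.to_subtype hTnonempty
    set m : ℕ := Fintype.card ↥T with hm
    have hm1 : 0 < m := Fintype.card_pos
    have hmR : (0:ℝ) < (m:ℝ) := by exact_mod_cast hm1
    set B : Module.Basis ↥T ℝ ↥V0 := Module.Basis.span hTli with hB
    set e : S → A → ℝ := ∑ i : ↥T, (m:ℝ)⁻¹ • (i : S → A → ℝ) with he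
    have heD : e ∈ Dset C R := by
      refine hDconv.sum_mem (fun i _ => by positivity) ?_ (fun i _ => hTsub i.2)
      rw [Finset.sum_const, Finset.card_univ, ← hm, nsmul_eq_mul]
      field_simp
    obtain ⟨⟨ue, ve⟩, ⟨hue, hve, hRe⟩, heq⟩ := heD
    have heq : ue - ve = e := heq
    have hstep : ∀ lam : ℝ, 0 < lam → lam ≤ 1 →
        (1-lam) • (a-b) + lam • e ∈ coneD C R := by
      intro lam hl0 hl1
      obtain ⟨xs, hxs, hxtend⟩ := mem_closure_iff_seq_limit.mp hc
      have hxV0 : a - b ∈ V0 := hclosure_sub hc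
      have hyV0 : ∀ n, ((1-lam)/lam) • (a - b - xs n) ∈ V0 := fun n =>
        V0.smul_mem _ (V0.sub_mem hxV0 (hcone_sub (hxs n)))
      set y : ℕ → ↥V0 := fun n => ⟨((1-lam)/lam) • (a - b - xs n), hyV0 n⟩ with hy
      have hytend : Filter.Tendsto y Filter.atTop (nhds 0) := by
        rw [Topology.IsEmbedding.subtypeVal.tendsto_nhds_iff]
        have h1 : Filter.Tendsto (fun n => a - b - xs n) Filter.atTop (nhds 0) := by
          have h2 := tendsto_const_nhds (x := a - b) (f := Filter.atTop (α := ℕ)) |>.sub hxtend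
          simpa using h2
        have h3 := h1.const_smul ((1-lam)/lam)
        simpa [hy, Function.comp_def] using h3
      have hcoordtend : ∀ i : ↥T,
          Filter.Tendsto (fun n => B.repr (y n) i) Filter.atTop (nhds 0) := by
        intro i
        have hcont : Continuous (fun v : ↥V0 => B.coord i v) :=
          (B.coord i).continuous_of_finiteDimensional
        have h4 := (hcont.tendsto 0).comp hytend
        have h0' : B.coord i 0 = 0 := LinearMap.map_zero _
        rw [h0'] at h4
        have h5 : (fun v : ↥V0 => B.coord i v) ∘ y = fun n => B.repr (y n) i := by
          funext n; simp [Module.Basis.coord_apply]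
        rwa [h5] at h4
      have hev : ∀ᶠ n in Filter.atTop, ∀ i : ↥T, -(m:ℝ)⁻¹ < B.repr (y n) i := by
        rw [Filter.eventually_all]
        intro i
        exact (hcoordtend i).eventually (eventually_gt_nhds (neg_lt_zero.mpr (by positivity)))
      obtain ⟨n, hn⟩ := hev.exists
      have hzval : e + (y n : S → A → ℝ)
          = ∑ i : ↥T, ((m:ℝ)⁻¹ + B.repr (y n) i) • (i : S → A → ℝ) := by
        have h5 : ((y n : ↥V0) : S → A → ℝ)
            = ∑ i : ↥T, B.repr (y n) i • (i : S → A → ℝ) := by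
          conv_lhs => rw [← B.sum_repr (y n)]
          push_cast
          refine Finset.sum_congr rfl (fun i _ => ?_)
          rw [hB, Module.Basis.span_apply]
        rw [he, h5, ← Finset.sum_add_distrib]
        refine Finset.sum_congr rfl (fun i _ => ?_)
        rw [add_smul]
      have hzmem : e + (y n : S → A → ℝ) ∈ coneD C R := by
        rw [hzval]
        refine conic_sum_mem hDconv h0cone Finset.univ _ _
          (fun i _ => by have := hn i; linarith) (fun i _ => D_subset_coneD (hTsub i.2))
      have hdecomp : (1-lam) • (a-b) + lam • e
          = (1-lam) • xs n + lam • (e + (y n : S → A → ℝ)) := by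
        show (1-lam) • (a-b) + lam • e
          = (1-lam) • xs n + lam • (e + ((1-lam)/lam) • (a - b - xs n))
        match_scalars <;> field_simp <;> ring
      rw [hdecomp]
      exact add_mem_coneD hDconv (smul_mem_coneD (hxs n) (by linarith))
        (smul_mem_coneD hzmem (le_of_lt hl0))
    -- now take limits along lam_j = 1/(j+1)
    set lam : ℕ → ℝ := fun j => 1/((j:ℝ)+1) with hlam
    have hlam0 : ∀ j, 0 < lam j := fun j => by rw [hlam]; positivity
    have hlam1 : ∀ j, lam j ≤ 1 := fun j => by
      rw [hlam]
      rw [div_le_one (by positivity)]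
      simp
    set aj : ℕ → S → A → ℝ := fun j => (1 - lam j) • a + lam j • ue with haj
    set bj : ℕ → S → A → ℝ := fun j => (1 - lam j) • b + lam j • ve with hbj
    have hajC : ∀ j, aj j ∈ C := by
      intro j
      have h := hmix a ha ue hue (1 - lam j) (by have := hlam1 j; linarith)
        (by have := hlam0 j; linarith)
      rw [sub_sub_cancel] at h
      exact h
    have hbjC : ∀ j, bj j ∈ C := by
      intro j
      have h := hmix b hb ve hve (1 - lam j) (by have := hlam1 j; linarith)
        (by have := hlam0 j; linarith)
      rw [sub_sub_cancel] at h
      exact h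
    have hRj : ∀ j, R (aj j) (bj j) := by
      intro j
      apply r_of_mem_coneD hE hmix hDcl (hajC j) (hbjC j)
      have hd : aj j - bj j = (1 - lam j) • (a-b) + lam j • e := by
        rw [haj, hbj, ← heq]; module
      rw [hd]
      exact hstep (lam j) (hlam0 j) (hlam1 j)
    have hlamtend : Filter.Tendsto lam Filter.atTop (nhds 0) := by
      rw [hlam]; exact tendsto_one_div_add_atTop_nhds_zero_nat
    have hatend : Filter.Tendsto aj Filter.atTop (nhds a) := by
      have h1 := ((hlamtend.const_sub 1).smul_const a).add (hlamtend.smul_const ue)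
      simpa using h1
    have hbtend : Filter.Tendsto bj Filter.atTop (nhds b) := by
      have h1 := ((hlamtend.const_sub 1).smul_const b).add (hlamtend.smul_const ve)
      simpa using h1
    have hpairtend : Filter.Tendsto (fun j => (aj j, bj j)) Filter.atTop (nhds (a, b)) :=
      hatend.prodMk_nhds hbtend
    have hmem := hCG.mem_of_tendsto hpairtend
      (Filter.Eventually.of_forall (fun j => ⟨hajC j, hbjC j, hRj j⟩))
    exact hmem.2.2

def Wset (C : Set (S → A → ℝ)) (R : (S → A → ℝ) → (S → A → ℝ) → Prop) :
    Set (S → A → ℝ) := {w | ∀ d ∈ Dset C R, 0 ≤ dot w d}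

theorem dot_neg_left (w x : S → A → ℝ) : dot (-w) x = - dot w x := by
  rw [dot_comm, dot_neg, dot_comm]

theorem dot_smul_left (r : ℝ) (w x : S → A → ℝ) : dot (r • w) x = r * dot w x := by
  rw [dot_comm, dot_smul, dot_comm]

theorem dot_add_left (w w' x : S → A → ℝ) : dot (w + w') x = dot w x + dot w' x := by
  simp [dot, Pi.add_apply, add_mul, Finset.sum_add_distrib]

theorem dot_zero_left (x : S → A → ℝ) : dot 0 x = 0 := by
  rw [dot_comm]; exact (dotL x).map_zero

theorem isClosed_W : IsClosed (Wset C R) := by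
  have hrw : Wset C R = ⋂ d ∈ Dset C R, {w | 0 ≤ dot w d} := by
    ext w; simp [Wset, Set.mem_iInter]
  rw [hrw]
  exact isClosed_biInter (fun d _ => isClosed_le continuous_const (continuous_dot' d))

theorem zero_mem_W : (0 : S → A → ℝ) ∈ Wset C R :=
  fun d _ => le_of_eq (dot_zero_left d).symm

open scoped Classical in
noncomputable def basisVec (s : S) (c : A) : S → A → ℝ :=
  fun s' c' => if s' = s ∧ c' = c then 1 else 0

theorem exists_w (f : (S → A → ℝ) →L[ℝ] ℝ) : ∃ w : S → A → ℝ, ∀ x, dot w x = f x := by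
  classical
  refine ⟨fun s c => f (basisVec s c), fun x => ?_⟩
  have hx : x = ∑ s, ∑ c, x s c • basisVec s c := by
    funext s' c'
    have h1 : (∑ s, ∑ c, x s c • basisVec s c) s' c'
        = ∑ s, ∑ c, x s c * basisVec s c s' c' := by
      simp [Finset.sum_apply]
    rw [h1, Finset.sum_eq_single s'
        (fun s _ hs => Finset.sum_eq_zero (fun c _ => by simp [basisVec, Ne.symm hs]))
        (fun h => absurd (Finset.mem_univ s') h),
      Finset.sum_eq_single c'
        (fun c _ hc => by simp [basisVec, Ne.symm hc])
        (fun h => absurd (Finset.mem_univ c') h)]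
    simp [basisVec]
  conv_rhs => rw [hx]
  rw [map_sum]
  unfold dot
  refine Finset.sum_congr rfl (fun s _ => ?_)
  rw [map_sum]
  refine Finset.sum_congr rfl (fun c _ => ?_)
  rw [f.map_smul, smul_eq_mul, mul_comm]

/-- Main duality characterization of the relation. -/
theorem r_iff_dual (hE : ExtMixCancel C R)
    (hmix : ∀ a ∈ C, ∀ b ∈ C, ∀ r : ℝ, 0 ≤ r → r ≤ 1 → r • a + (1 - r) • b ∈ C)
    (hAA : ∀ a ∈ C, IsAAAct a) (hclosedC : IsClosed C) (hCG : ClosedGraphOn C R)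
    {a b : S → A → ℝ} (ha : a ∈ C) (hb : b ∈ C) :
    R a b ↔ ∀ w ∈ Wset C R, 0 ≤ dot w (a - b) := by
  constructor
  · intro hr w hw; exact hw _ (mem_D_of_r ha hb hr)
  · intro hdual
    by_contra hnr
    have hDcl : IsClosed (Dset C R) := (isCompact_D hAA hclosedC hCG).isClosed
    have hDconv : Convex ℝ (Dset C R) := convex_D hE hmix hDcl
    have h0cone : (0 : S → A → ℝ) ∈ coneD C R := D_subset_coneD (zero_mem_D hE ha)
    have hnc : a - b ∉ closure (coneD C R) := fun hc =>
      hnr (r_of_mem_closure_coneD hE hmix hAA hclosedC hCG ha hb hc)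
    have hconv : Convex ℝ (closure (coneD C R)) := (convex_coneD hDconv).closure
    obtain ⟨f, u, hfu, hux⟩ := geometric_hahn_banach_closed_point hconv isClosed_closure hnc
    have h0u : 0 < u := by
      have := hfu 0 (subset_closure h0cone)
      simpa using this
    have hfle : ∀ d ∈ Dset C R, f d ≤ 0 := by
      intro d hd
      by_contra hpos
      push_neg at hpos
      have hmem : ((u+1)/f d) • d ∈ closure (coneD C R) :=
        subset_closure (smul_mem_coneD (D_subset_coneD hd) (by positivity))
      have h2 := hfu _ hmem
      rw [f.map_smul, smul_eq_mul, div_mul_cancel₀ _ (ne_of_gt hpos)] at h2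
      linarith
    obtain ⟨w, hw⟩ := exists_w f
    have hwW : (-w) ∈ Wset C R := by
      intro d hd
      rw [dot_neg_left, hw]
      linarith [hfle d hd]
    have hge := hdual (-w) hwW
    rw [dot_neg_left, hw] at hge
    linarith

section Encode

variable (S A) [Nonempty S] [Nonempty A]

def nsE : ℕ := Fintype.card ((S × A) × Bool) - 1

theorem card_eq : Fintype.card ((S × A) × Bool) = nsE S A + 1 := by
  have h : 0 < Fintype.card ((S × A) × Bool) := Fintype.card_pos
  unfold nsE; omega

noncomputable def eqv : Fin (nsE S A + 1) ≃ (S × A) × Bool :=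
  (Fintype.equivFinOfCardEq (card_eq S A)).symm

noncomputable def hmap : Fin (nsE S A + 1) → S := fun i => (eqv S A i).1.1
noncomputable def amap : Fin (nsE S A + 1) → A := fun i => (eqv S A i).1.2
noncomputable def sgn : Fin (nsE S A + 1) → ℝ := fun i => if (eqv S A i).2 then 1 else -1

def umap : Fin 3 → ℝ := ![0, 1, -1]

open scoped Classical in
noncomputable def gmap : Fin (nsE S A + 1) × A → Fin 3 := fun q =>
  if (eqv S A q.1).1.2 = q.2 then (if (eqv S A q.1).2 then 1 else 2) else 0

theorem inner_sum (x : S → A → ℝ) (i : Fin (nsE S A + 1)) :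
    ∑ c, x (hmap S A i) c * umap (gmap S A (i, c))
      = sgn S A i * x (hmap S A i) (amap S A i) := by
  classical
  rw [Finset.sum_eq_single (amap S A i)
    (fun c _ hc => by
      have : gmap S A (i, c) = 0 := by
        unfold gmap; rw [if_neg]; exact fun h => hc (h.symm)
      rw [this]; simp [umap])
    (fun h => absurd (Finset.mem_univ _) h)]
  have : gmap S A (i, amap S A i) = if (eqv S A i).2 then 1 else 2 := by
    unfold gmap amap; rw [if_pos rfl]
  rw [this]
  unfold sgn
  rcases Bool.eq_false_or_eq_true (eqv S A i).2 with hbb | hbb <;>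
    simp [hbb, umap, mul_comm]

noncomputable def Lval (p : Fin (nsE S A + 1) → ℝ) (x : S → A → ℝ) : ℝ :=
  ∑ s', p s' * ∑ c, x (hmap S A s') c * umap (gmap S A (s', c))

theorem Lval_eq (p : Fin (nsE S A + 1) → ℝ) (x : S → A → ℝ) :
    Lval S A p x = ∑ i, p i * (sgn S A i * x (hmap S A i) (amap S A i)) :=
  Finset.sum_congr rfl (fun i _ => by rw [inner_sum])

open scoped Classical in
noncomputable def vecp (p : Fin (nsE S A + 1) → ℝ) : S → A → ℝ :=
  fun s c => ∑ i, (if (eqv S A i).1 = (s, c) then p i * sgn S A i else 0)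

theorem Lval_dot (p : Fin (nsE S A + 1) → ℝ) (x : S → A → ℝ) :
    Lval S A p x = dot (vecp S A p) x := by
  classical
  rw [Lval_eq]
  symm
  have hswap : ∀ s c, (∑ i, if (eqv S A i).1 = (s, c) then p i * sgn S A i else 0) * x s c
      = ∑ i, (if (eqv S A i).1 = (s, c) then p i * sgn S A i * x s c else 0) := by
    intro s c
    rw [Finset.sum_mul]
    refine Finset.sum_congr rfl (fun i _ => ?_)
    rw [ite_mul, zero_mul]
  calc dot (vecp S A p) x
      = ∑ s, ∑ c, (∑ i, if (eqv S A i).1 = (s, c) then p i * sgn S A i else 0) * x s c := by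
        simp only [dot, vecp]
    _ = ∑ s, ∑ c, ∑ i, (if (eqv S A i).1 = (s, c) then p i * sgn S A i * x s c else 0) :=
        Finset.sum_congr rfl (fun s _ => Finset.sum_congr rfl (fun c _ => hswap s c))
    _ = ∑ q : S × A, ∑ i, (if (eqv S A i).1 = q then p i * sgn S A i * x q.1 q.2 else 0) :=
        (Fintype.sum_prod_type
          (fun q : S × A => ∑ i, (if (eqv S A i).1 = q then p i * sgn S A i * x q.1 q.2 else 0))).symm
    _ = ∑ i, ∑ q : S × A, (if (eqv S A i).1 = q then p i * sgn S A i * x q.1 q.2 else 0) :=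
        Finset.sum_comm
    _ = ∑ i, p i * sgn S A i * x (eqv S A i).1.1 (eqv S A i).1.2 := by
        refine Finset.sum_congr rfl (fun i _ => ?_)
        rw [Finset.sum_ite_eq univ ((eqv S A i).1) (fun q => p i * sgn S A i * x q.1 q.2)]
        simp
    _ = ∑ i, p i * (sgn S A i * x (hmap S A i) (amap S A i)) := by
        refine Finset.sum_congr rfl (fun i _ => ?_)
        unfold hmap amap
        ring
  
theorem max_sub_max_neg (a : ℝ) : max a 0 - max (-a) 0 = a := by
  rcases le_total a 0 with h | h
  · rw [max_eq_right h, max_eq_left (by linarith)]; ring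
  · rw [max_eq_left h, max_eq_right (by linarith)]; ring

noncomputable def punif : Fin (nsE S A + 1) → ℝ := fun _ => ((nsE S A + 1 : ℕ) : ℝ)⁻¹

theorem punif_nonneg : ∀ i, 0 ≤ punif S A i := fun _ => by unfold punif; positivity

theorem punif_sum : ∑ i, punif S A i = 1 := by
  unfold punif
  rw [Finset.sum_const, Finset.card_univ, Fintype.card_fin, nsmul_eq_mul]
  rw [mul_inv_cancel₀]
  exact Nat.cast_ne_zero.mpr (Nat.succ_ne_zero _)

theorem vecp_punif : vecp S A (punif S A) = 0 := by
  classical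
  funext s c
  show (∑ i, if (eqv S A i).1 = (s, c) then punif S A i * sgn S A i else 0) = 0
  calc (∑ i, if (eqv S A i).1 = (s, c) then punif S A i * sgn S A i else 0)
      = ∑ j : (S × A) × Bool, (if j.1 = (s, c)
          then ((nsE S A + 1 : ℕ) : ℝ)⁻¹ * (if j.2 then (1:ℝ) else -1) else 0) :=
        Equiv.sum_comp (eqv S A) (fun j : (S × A) × Bool => if j.1 = (s, c)
          then ((nsE S A + 1 : ℕ) : ℝ)⁻¹ * (if j.2 then (1:ℝ) else -1) else 0)
    _ = ∑ q : S × A, ∑ b : Bool, (if q = (s, c)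
          then ((nsE S A + 1 : ℕ) : ℝ)⁻¹ * (if b then (1:ℝ) else -1) else 0) :=
        Fintype.sum_prod_type (fun j : (S × A) × Bool => if j.1 = (s, c)
          then ((nsE S A + 1 : ℕ) : ℝ)⁻¹ * (if j.2 then (1:ℝ) else -1) else 0)
    _ = 0 := Finset.sum_eq_zero (fun q _ => by
        rw [Fintype.sum_bool]
        by_cases hq : q = (s, c)
        · rw [if_pos hq, if_pos hq, if_pos rfl, if_neg Bool.false_ne_true]; ring
        · rw [if_neg hq, if_neg hq]; ring)

noncomputable def pw (w : S → A → ℝ) : Fin (nsE S A + 1) → ℝ := fun i =>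
  (if (eqv S A i).2 then max (w (hmap S A i) (amap S A i)) 0
   else max (-(w (hmap S A i) (amap S A i))) 0) / (∑ q : S × A, |w q.1 q.2|)

theorem pw_nonneg (w : S → A → ℝ) (hT : 0 < ∑ q : S × A, |w q.1 q.2|) :
    ∀ i, 0 ≤ pw S A w i := by
  intro i
  unfold pw
  apply div_nonneg _ (le_of_lt hT)
  split <;> exact le_max_right _ _

theorem pw_sum (w : S → A → ℝ) (hT : 0 < ∑ q : S × A, |w q.1 q.2|) :
    ∑ i, pw S A w i = 1 := by
  classical
  set Tw := ∑ q : S × A, |w q.1 q.2| with hTw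
  calc ∑ i, pw S A w i
      = ∑ j : (S × A) × Bool, (if j.2 then max (w j.1.1 j.1.2) 0
          else max (-(w j.1.1 j.1.2)) 0) / Tw :=
        Equiv.sum_comp (eqv S A) (fun j : (S × A) × Bool => (if j.2 then max (w j.1.1 j.1.2) 0
          else max (-(w j.1.1 j.1.2)) 0) / Tw)
    _ = ∑ q : S × A, ∑ b : Bool, (if b then max (w q.1 q.2) 0
          else max (-(w q.1 q.2)) 0) / Tw :=
        Fintype.sum_prod_type (fun j : (S × A) × Bool => (if j.2 then max (w j.1.1 j.1.2) 0
          else max (-(w j.1.1 j.1.2)) 0) / Tw)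
    _ = ∑ q : S × A, |w q.1 q.2| / Tw := Finset.sum_congr rfl (fun q _ => by
        rw [Fintype.sum_bool, if_pos rfl, if_neg Bool.false_ne_true, ← add_div,
          max_zero_add_max_neg_zero_eq_abs_self])
    _ = Tw / Tw := by rw [← Finset.sum_div]
    _ = 1 := div_self (ne_of_gt hT)

theorem vecp_pw (w : S → A → ℝ) (hT : 0 < ∑ q : S × A, |w q.1 q.2|) :
    vecp S A (pw S A w) = (∑ q : S × A, |w q.1 q.2|)⁻¹ • w := by
  classical
  set Tw := ∑ q : S × A, |w q.1 q.2| with hTw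
  funext s c
  show (∑ i, if (eqv S A i).1 = (s, c) then pw S A w i * sgn S A i else 0) = Tw⁻¹ * w s c
  calc (∑ i, if (eqv S A i).1 = (s, c) then pw S A w i * sgn S A i else 0)
      = ∑ j : (S × A) × Bool, (if j.1 = (s, c)
          then ((if j.2 then max (w j.1.1 j.1.2) 0 else max (-(w j.1.1 j.1.2)) 0) / Tw)
            * (if j.2 then (1:ℝ) else -1) else 0) :=
        Equiv.sum_comp (eqv S A) (fun j : (S × A) × Bool => if j.1 = (s, c)
          then ((if j.2 then max (w j.1.1 j.1.2) 0 else max (-(w j.1.1 j.1.2)) 0) / Tw)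
            * (if j.2 then (1:ℝ) else -1) else 0)
    _ = ∑ q : S × A, ∑ b : Bool, (if q = (s, c)
          then ((if b then max (w q.1 q.2) 0 else max (-(w q.1 q.2)) 0) / Tw)
            * (if b then (1:ℝ) else -1) else 0) :=
        Fintype.sum_prod_type (fun j : (S × A) × Bool => if j.1 = (s, c)
          then ((if j.2 then max (w j.1.1 j.1.2) 0 else max (-(w j.1.1 j.1.2)) 0) / Tw)
            * (if j.2 then (1:ℝ) else -1) else 0)
    _ = ∑ q : S × A, (if q = (s, c) then w q.1 q.2 / Tw else 0) :=
        Finset.sum_congr rfl (fun q _ => by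
          rw [Fintype.sum_bool]
          by_cases hq : q = (s, c)
          · subst hq
            simp only [eq_self_iff_true, if_true, Bool.false_eq_true, if_false]
            have hmx : max (w (s, c).1 (s, c).2) 0
                = w (s, c).1 (s, c).2 + max (-(w (s, c).1 (s, c).2)) 0 := by
              have := max_sub_max_neg (w (s, c).1 (s, c).2); linarith
            rw [hmx]; ring
          · simp [hq])
    _ = w s c / Tw := by
        rw [Finset.sum_ite_eq' Finset.univ ((s, c) : S × A)
          (fun q : S × A => w q.1 q.2 / Tw)]
        simp
    _ = Tw⁻¹ * w s c := by rw [div_eq_inv_mul]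

theorem smul_mem_W {w : S → A → ℝ} (hw : w ∈ Wset C R) {r : ℝ} (hr : 0 ≤ r) :
    r • w ∈ Wset C R := by
  intro d hd
  rw [dot_smul_left]
  exact mul_nonneg hr (hw d hd)

end Encode

section Backward

variable {ns no : ℕ}

/-- The SEU functional as a linear map. -/
def repL (h : Fin (ns + 1) → S) (g : Fin (ns + 1) × A → Fin (no + 1))
    (u : Fin (no + 1) → ℝ) (p : Fin (ns + 1) → ℝ) : (S → A → ℝ) →ₗ[ℝ] ℝ where
  toFun x := ∑ s', p s' * ∑ c, x (h s') c * u (g (s', c))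
  map_add' x y := by
    rw [← Finset.sum_add_distrib]
    refine Finset.sum_congr rfl (fun s' _ => ?_)
    rw [← mul_add, ← Finset.sum_add_distrib]
    congr 1
    refine Finset.sum_congr rfl (fun c _ => ?_)
    rw [Pi.add_apply, Pi.add_apply, add_mul]
  map_smul' r x := by
    show (∑ s', p s' * ∑ c, (r • x) (h s') c * u (g (s', c)))
      = r • ∑ s', p s' * ∑ c, x (h s') c * u (g (s', c))
    rw [smul_eq_mul, Finset.mul_sum]
    refine Finset.sum_congr rfl (fun s' _ => ?_)
    rw [Finset.mul_sum, Finset.mul_sum, Finset.mul_sum]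
    refine Finset.sum_congr rfl (fun c _ => ?_)
    rw [Pi.smul_apply, Pi.smul_apply, smul_eq_mul]
    ring

theorem emc_of_rep {C : Set (S → A → ℝ)} {R : (S → A → ℝ) → (S → A → ℝ) → Prop}
    {h : Fin (ns + 1) → S} {g : Fin (ns + 1) × A → Fin (no + 1)}
    {u : Fin (no + 1) → ℝ} {P : Set (Fin (ns + 1) → ℝ)}
    (hrep : ∀ a ∈ C, ∀ b ∈ C, (R a b ↔ ∀ p ∈ P, repL h g u p a ≥ repL h g u p b)) :
    ExtMixCancel C R := by
  intro n aseq bseq hamem hbmem hsum ⟨k, hk, hfirst, htail⟩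
  classical
  refine (hrep _ (hbmem _) _ (hamem _)).mpr (fun p hp => ?_)
  set F := repL h g u p with hF
  have hs : ∑ i, F (aseq i) = ∑ i, F (bseq i) := by
    rw [← map_sum, ← map_sum, hsum]
  have hsplitA := Finset.sum_filter_add_sum_filter_not Finset.univ
    (fun i : Fin (n + 1) => (i : ℕ) < k) (fun i => F (aseq i))
  have hsplitB := Finset.sum_filter_add_sum_filter_not Finset.univ
    (fun i : Fin (n + 1) => (i : ℕ) < k) (fun i => F (bseq i))
  set s1 := Finset.filter (fun i : Fin (n + 1) => (i : ℕ) < k) Finset.univ with hs1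
  set s2 := Finset.filter (fun i : Fin (n + 1) => ¬ (i : ℕ) < k) Finset.univ with hs2
  have hA2 : ∑ i ∈ s2, F (aseq i) = s2.card • F (aseq (Fin.last n)) := by
    rw [Finset.sum_congr rfl (fun i hi => by
      rw [(htail i (by simpa [hs2] using (Finset.mem_filter.mp hi).2)).1]),
      Finset.sum_const]
  have hB2 : ∑ i ∈ s2, F (bseq i) = s2.card • F (bseq (Fin.last n)) := by
    rw [Finset.sum_congr rfl (fun i hi => by
      rw [(htail i (by simpa [hs2] using (Finset.mem_filter.mp hi).2)).2]),
      Finset.sum_const]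
  have h1 : ∑ i ∈ s1, F (bseq i) ≤ ∑ i ∈ s1, F (aseq i) := by
    refine Finset.sum_le_sum (fun i hi => ?_)
    have hik : (i : ℕ) < k := by simpa [hs1] using (Finset.mem_filter.mp hi).2
    exact (hrep _ (hamem i) _ (hbmem i)).mp (hfirst i hik) p hp
  have hcard : 0 < s2.card := by
    refine Finset.card_pos.mpr ⟨Fin.last n, ?_⟩
    rw [hs2, Finset.mem_filter]
    exact ⟨Finset.mem_univ _, by simp; omega⟩
  have hcR : (0:ℝ) < (s2.card : ℝ) := by exact_mod_cast hcard
  have key : (s2.card : ℝ) * F (aseq (Fin.last n)) ≤ (s2.card : ℝ) * F (bseq (Fin.last n)) := by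
    have e1 : ∑ i ∈ s1, F (aseq i) + (s2.card : ℝ) * F (aseq (Fin.last n))
        = ∑ i ∈ s1, F (bseq i) + (s2.card : ℝ) * F (bseq (Fin.last n)) := by
      rw [← nsmul_eq_mul, ← nsmul_eq_mul, ← hA2, ← hB2, hsplitA, hsplitB, hs]
    linarith
  exact le_of_mul_le_mul_left key hcR

theorem cg_of_rep {C : Set (S → A → ℝ)} {R : (S → A → ℝ) → (S → A → ℝ) → Prop}
    (hclosedC : IsClosed C)
    {h : Fin (ns + 1) → S} {g : Fin (ns + 1) × A → Fin (no + 1)}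
    {u : Fin (no + 1) → ℝ} {P : Set (Fin (ns + 1) → ℝ)}
    (hrep : ∀ a ∈ C, ∀ b ∈ C, (R a b ↔ ∀ p ∈ P, repL h g u p a ≥ repL h g u p b)) :
    ClosedGraphOn C R := by
  have hset : {q : (S → A → ℝ) × (S → A → ℝ) | q.1 ∈ C ∧ q.2 ∈ C ∧ R q.1 q.2}
      = (C ×ˢ C) ∩ ⋂ p ∈ P, {q : (S → A → ℝ) × (S → A → ℝ) |
          repL h g u p q.2 ≤ repL h g u p q.1} := by
    ext q
    simp only [Set.mem_setOf_eq, Set.mem_inter_iff, Set.mem_prod, Set.mem_iInter]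
    constructor
    · rintro ⟨h1, h2, h3⟩
      exact ⟨⟨h1, h2⟩, fun p hp => (hrep _ h1 _ h2).mp h3 p hp⟩
    · rintro ⟨⟨h1, h2⟩, h3⟩
      exact ⟨h1, h2, (hrep _ h1 _ h2).mpr (fun p hp => h3 p hp)⟩
  unfold ClosedGraphOn
  rw [hset]
  refine (hclosedC.prod hclosedC).inter (isClosed_biInter (fun p _ => ?_))
  exact isClosed_le
    ((repL h g u p).continuous_of_finiteDimensional.comp continuous_snd)
    ((repL h g u p).continuous_of_finiteDimensional.comp continuous_fst)

end Backward

section Forward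

variable (S A) [Nonempty S] [Nonempty A]

theorem vecp_add (p q : Fin (nsE S A + 1) → ℝ) :
    vecp S A (p + q) = vecp S A p + vecp S A q := by
  classical
  funext s c
  show (∑ i, if (eqv S A i).1 = (s, c) then (p + q) i * sgn S A i else 0)
    = (∑ i, if (eqv S A i).1 = (s, c) then p i * sgn S A i else 0)
      + (∑ i, if (eqv S A i).1 = (s, c) then q i * sgn S A i else 0)
  rw [← Finset.sum_add_distrib]
  refine Finset.sum_congr rfl (fun i _ => ?_)
  by_cases hc : (eqv S A i).1 = (s, c)
  · rw [if_pos hc, if_pos hc, if_pos hc, Pi.add_apply, add_mul]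
  · rw [if_neg hc, if_neg hc, if_neg hc, add_zero]

theorem vecp_smul (r : ℝ) (p : Fin (nsE S A + 1) → ℝ) :
    vecp S A (r • p) = r • vecp S A p := by
  classical
  funext s c
  show (∑ i, if (eqv S A i).1 = (s, c) then (r • p) i * sgn S A i else 0)
    = r * (∑ i, if (eqv S A i).1 = (s, c) then p i * sgn S A i else 0)
  rw [Finset.mul_sum]
  refine Finset.sum_congr rfl (fun i _ => ?_)
  by_cases hc : (eqv S A i).1 = (s, c)
  · rw [if_pos hc, if_pos hc, Pi.smul_apply, smul_eq_mul, mul_assoc]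
  · rw [if_neg hc, if_neg hc, mul_zero]

noncomputable def vecpL : (Fin (nsE S A + 1) → ℝ) →ₗ[ℝ] (S → A → ℝ) where
  toFun := vecp S A
  map_add' := vecp_add S A
  map_smul' := vecp_smul S A

theorem continuous_vecp : Continuous (vecp S A) :=
  (vecpL S A).continuous_of_finiteDimensional

variable {S A}

/-- Forward direction: the axioms imply the multi-prior SEU representation. -/
theorem forward_rep {C : Set (S → A → ℝ)} {R : (S → A → ℝ) → (S → A → ℝ) → Prop}
    (hAA : ∀ a ∈ C, IsAAAct a) (hclosedC : IsClosed C)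
    (hmix : ∀ a ∈ C, ∀ b ∈ C, ∀ r : ℝ, 0 ≤ r → r ≤ 1 → r • a + (1 - r) • b ∈ C)
    (hE : ExtMixCancel C R) (hCG : ClosedGraphOn C R) :
    ∃ P : Set (Fin (nsE S A + 1) → ℝ),
      P.Nonempty ∧ IsClosed P ∧
      (∀ p ∈ P, (∀ s', 0 ≤ p s') ∧ (∑ s', p s' = 1)) ∧
      (∀ a ∈ C, ∀ b ∈ C, (R a b ↔ ∀ p ∈ P, Lval S A p a ≥ Lval S A p b)) := by
  classical
  set P : Set (Fin (nsE S A + 1) → ℝ) :=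
    {p | (∀ i, 0 ≤ p i) ∧ (∑ i, p i) = 1 ∧ vecp S A p ∈ Wset C R} with hP
  refine ⟨P, ⟨punif S A, punif_nonneg S A, punif_sum S A, ?_⟩, ?_, fun p hp => ⟨hp.1, hp.2.1⟩,
    fun a ha b hb => ?_⟩
  · rw [vecp_punif]; exact zero_mem_W
  · have h1 : IsClosed {p : Fin (nsE S A + 1) → ℝ | ∀ i, 0 ≤ p i} := by
      have : {p : Fin (nsE S A + 1) → ℝ | ∀ i, 0 ≤ p i}
          = ⋂ i, {p : Fin (nsE S A + 1) → ℝ | 0 ≤ p i} := by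
        ext p; simp [Set.mem_iInter]
      rw [this]
      exact isClosed_iInter (fun i => isClosed_le continuous_const (continuous_apply i))
    have h2 : IsClosed {p : Fin (nsE S A + 1) → ℝ | (∑ i, p i) = 1} :=
      isClosed_eq (continuous_finset_sum _ (fun i _ => continuous_apply i)) continuous_const
    have h3 : IsClosed {p : Fin (nsE S A + 1) → ℝ | vecp S A p ∈ Wset C R} :=
      IsClosed.preimage (continuous_vecp S A) isClosed_W
    have : P = {p : Fin (nsE S A + 1) → ℝ | ∀ i, 0 ≤ p i}
        ∩ ({p | (∑ i, p i) = 1} ∩ {p | vecp S A p ∈ Wset C R}) := by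
      ext p; simp [hP, Set.mem_inter_iff, and_assoc]
    rw [this]
    exact h1.inter (h2.inter h3)
  · rw [r_iff_dual hE hmix hAA hclosedC hCG ha hb]
    constructor
    · intro hdual p hp
      have h0 := hdual (vecp S A p) hp.2.2
      rw [dot_sub] at h0
      rw [ge_iff_le, Lval_dot, Lval_dot]
      linarith
    · intro hLp w hw
      by_cases hT : 0 < ∑ q : S × A, |w q.1 q.2|
      · have hpw : pw S A w ∈ P :=
          ⟨pw_nonneg S A w hT, pw_sum S A w hT, by
            rw [vecp_pw S A w hT]
            exact smul_mem_W S A hw (inv_nonneg.mpr (le_of_lt hT))⟩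
        have h0 := hLp (pw S A w) hpw
        rw [ge_iff_le, Lval_dot, Lval_dot, ← sub_nonneg, ← dot_sub, vecp_pw S A w hT,
          dot_smul_left] at h0
        have hTpos : (0:ℝ) < (∑ q : S × A, |w q.1 q.2|) := hT
        nlinarith [h0, inv_pos.mpr hTpos]
      · have hw0 : w = 0 := by
          push_neg at hT
          have hT0 : ∑ q : S × A, |w q.1 q.2| = 0 :=
            le_antisymm hT (Finset.sum_nonneg (fun q _ => abs_nonneg _))
          have := (Finset.sum_eq_zero_iff_of_nonneg
            (fun q _ => abs_nonneg (w q.1 q.2))).mp hT0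
          funext s c
          have h4 := this (s, c) (Finset.mem_univ _)
          exact abs_eq_zero.mp h4
        rw [hw0, dot_zero_left]

end Forward

section Complete

theorem dot_sum_left {ι : Type*} (s : Finset ι) (f : ι → (S → A → ℝ)) (x : S → A → ℝ) :
    dot (∑ i ∈ s, f i) x = ∑ i ∈ s, dot (f i) x :=
  calc dot (∑ i ∈ s, f i) x = dot x (∑ i ∈ s, f i) := dot_comm _ _
    _ = ∑ i ∈ s, dot x (f i) := map_sum (dotL x) _ _
    _ = ∑ i ∈ s, dot (f i) x := Finset.sum_congr rfl (fun i _ => dot_comm _ _)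

theorem sum_mem_W {ι : Type*} {s : Finset ι} {f : ι → (S → A → ℝ)}
    (hf : ∀ i ∈ s, f i ∈ Wset C R) : (∑ i ∈ s, f i) ∈ Wset C R := by
  intro d hd
  rw [dot_sum_left]
  exact Finset.sum_nonneg (fun i hi => hf i hi d hd)

variable [Nonempty S] [Nonempty A]

theorem complete_rep {C : Set (S → A → ℝ)} {R : (S → A → ℝ) → (S → A → ℝ) → Prop}
    (hAA : ∀ a ∈ C, IsAAAct a) (hclosedC : IsClosed C)
    (hmix : ∀ a ∈ C, ∀ b ∈ C, ∀ r : ℝ, 0 ≤ r → r ≤ 1 → r • a + (1 - r) • b ∈ C)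
    (hE : ExtMixCancel C R) (hCG : ClosedGraphOn C R)
    (hcomp : ∀ a ∈ C, ∀ b ∈ C, R a b ∨ R b a) :
    ∃ p : Fin (nsE S A + 1) → ℝ, (∀ i, 0 ≤ p i) ∧ (∑ i, p i = 1) ∧
      (∀ a ∈ C, ∀ b ∈ C, (R a b ↔ Lval S A p a ≥ Lval S A p b)) := by
  classical
  obtain ⟨T, hTsub, hTspan, hTli⟩ := exists_linearIndependent ℝ (Wset C R)
  haveI : Fintype ↥T := hTli.setFinite.fintype
  set wstar : S → A → ℝ := ∑ i : ↥T, (i : S → A → ℝ) with hwstar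
  have hwstarW : wstar ∈ Wset C R := sum_mem_W (fun i _ => hTsub i.2)
  have hclaim : ∀ a ∈ C, ∀ b ∈ C, (R a b ↔ 0 ≤ dot wstar (a - b)) := by
    intro a ha b hb
    constructor
    · intro hr
      exact (r_iff_dual hE hmix hAA hclosedC hCG ha hb).mp hr wstar hwstarW
    · intro h0
      rcases hcomp a ha b hb with hrab | hrba
      · exact hrab
      have hxD : b - a ∈ Dset C R := mem_D_of_r hb ha hrba
      have hge : ∀ φ ∈ Wset C R, 0 ≤ dot φ (b - a) := fun φ hφ => hφ _ hxD
      have hflip : b - a = -(a - b) := by abel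
      have h1 : dot wstar (b - a) = 0 := by
        refine le_antisymm ?_ (hge _ hwstarW)
        rw [hflip, dot_neg]
        linarith
      have hsum0 : ∑ i : ↥T, dot (i : S → A → ℝ) (b - a) = 0 := by
        rw [← dot_sum_left, ← hwstar]
        exact h1
      have hzero : ∀ i : ↥T, dot (i : S → A → ℝ) (b - a) = 0 := by
        intro i
        exact (Finset.sum_eq_zero_iff_of_nonneg
          (fun i _ => hge _ (hTsub i.2))).mp hsum0 i (Finset.mem_univ i)
      have hallzero : ∀ φ ∈ Wset C R, dot φ (b - a) = 0 := by
        intro φ hφ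
        have hmem : φ ∈ Submodule.span ℝ T := by
          rw [hTspan]
          exact Submodule.subset_span hφ
        obtain ⟨cf, hsupp, hrepr⟩ := Submodule.mem_span_set.mp hmem
        rw [← hrepr, Finsupp.sum, dot_sum_left]
        refine Finset.sum_eq_zero (fun m hm => ?_)
        rw [dot_smul_left, show dot m (b - a) = 0 from hzero ⟨m, hsupp hm⟩]
        ring
      refine (r_iff_dual hE hmix hAA hclosedC hCG ha hb).mpr (fun φ hφ => ?_)
      have h2 := hallzero φ hφ
      rw [hflip, dot_neg] at h2
      linarith
  by_cases hT : 0 < ∑ q : S × A, |wstar q.1 q.2|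
  · refine ⟨pw S A wstar, pw_nonneg S A wstar hT, pw_sum S A wstar hT, fun a ha b hb => ?_⟩
    rw [hclaim a ha b hb]
    have hkey : Lval S A (pw S A wstar) a - Lval S A (pw S A wstar) b
        = (∑ q : S × A, |wstar q.1 q.2|)⁻¹ * dot wstar (a - b) := by
      rw [Lval_dot, Lval_dot, ← dot_sub, vecp_pw S A wstar hT, dot_smul_left]
    constructor
    · intro h0
      rw [ge_iff_le, ← sub_nonneg, hkey]
      positivity
    · intro hge
      rw [ge_iff_le, ← sub_nonneg, hkey] at hge
      nlinarith [inv_pos.mpr hT]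
  · have hw0 : wstar = 0 := by
      push_neg at hT
      have hT0 : ∑ q : S × A, |wstar q.1 q.2| = 0 :=
        le_antisymm hT (Finset.sum_nonneg (fun q _ => abs_nonneg _))
      have hz := (Finset.sum_eq_zero_iff_of_nonneg
        (fun q _ => abs_nonneg (wstar q.1 q.2))).mp hT0
      funext s c
      exact abs_eq_zero.mp (hz (s, c) (Finset.mem_univ _))
    refine ⟨punif S A, punif_nonneg S A, punif_sum S A, fun a ha b hb => ?_⟩
    rw [hclaim a ha b hb, hw0, dot_zero_left]
    have hL : ∀ x, Lval S A (punif S A) x = 0 := by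
      intro x
      rw [Lval_dot, vecp_punif, dot_zero_left]
    rw [ge_iff_le, hL a, hL b]

end Complete

end SEUHelp

/-- A relation on a closed, mixture-closed set of AA acts satisfies extended mixture
cancellation and has closed graph iff it has a constructive SEU representation over some
finite nonempty subjective state space `Fin (ns+1)` and outcome space `Fin (no+1)`, with
a single utility function and a nonempty closed set of probability distributions; if the
relation is moreover complete, the set of probabilities can be chosen to be a singleton. -/
theorem extMixCancel_closedGraph_iff_constructiveSEURep
    {S A : Type*} [Fintype S] [Fintype A] [Nonempty S] [Nonempty A]
    (C : Set (S → A → ℝ)) (R : (S → A → ℝ) → (S → A → ℝ) → Prop)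
    (hAA : ∀ a ∈ C, IsAAAct a)
    (hclosedC : IsClosed C)
    (hmix : ∀ a ∈ C, ∀ b ∈ C, ∀ r : ℝ, 0 ≤ r → r ≤ 1 → r • a + (1 - r) • b ∈ C) :
    ((ExtMixCancel C R ∧ ClosedGraphOn C R) ↔
      ∃ (ns no : ℕ) (h : Fin (ns + 1) → S) (g : Fin (ns + 1) × A → Fin (no + 1))
        (u : Fin (no + 1) → ℝ) (P : Set (Fin (ns + 1) → ℝ)),
        P.Nonempty ∧ IsClosed P ∧
        (∀ p ∈ P, (∀ s', 0 ≤ p s') ∧ (∑ s', p s' = 1)) ∧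
        (∀ a ∈ C, ∀ b ∈ C,
          (R a b ↔ ∀ p ∈ P,
            ∑ s', p s' * ∑ c, a (h s') c * u (g (s', c)) ≥
            ∑ s', p s' * ∑ c, b (h s') c * u (g (s', c))))) ∧
    ((ExtMixCancel C R ∧ ClosedGraphOn C R ∧ (∀ a ∈ C, ∀ b ∈ C, R a b ∨ R b a)) →
      ∃ (ns no : ℕ) (h : Fin (ns + 1) → S) (g : Fin (ns + 1) × A → Fin (no + 1))
        (u : Fin (no + 1) → ℝ) (p : Fin (ns + 1) → ℝ),
        (∀ s', 0 ≤ p s') ∧ (∑ s', p s' = 1) ∧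
        (∀ a ∈ C, ∀ b ∈ C,
          (R a b ↔
            ∑ s', p s' * ∑ c, a (h s') c * u (g (s', c)) ≥
            ∑ s', p s' * ∑ c, b (h s') c * u (g (s', c))))) := by
  constructor
  · constructor
    · rintro ⟨hE, hCG⟩
      obtain ⟨P, hPne, hPcl, hPprob, hPrep⟩ :=
        SEUHelp.forward_rep hAA hclosedC hmix hE hCG
      exact ⟨SEUHelp.nsE S A, 2, SEUHelp.hmap S A, SEUHelp.gmap S A, SEUHelp.umap, P,
        hPne, hPcl, hPprob, hPrep⟩
    · rintro ⟨ns, no, h, g, u, P, hPne, hPcl, hPprob, hrep⟩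
      have hrep' : ∀ a ∈ C, ∀ b ∈ C,
          (R a b ↔ ∀ p ∈ P, SEUHelp.repL h g u p a ≥ SEUHelp.repL h g u p b) := hrep
      exact ⟨SEUHelp.emc_of_rep hrep', SEUHelp.cg_of_rep hclosedC hrep'⟩
  · rintro ⟨hE, hCG, hcomp⟩
    obtain ⟨p, h1, h2, h3⟩ := SEUHelp.complete_rep hAA hclosedC hmix hE hCG hcomp
    exact ⟨SEUHelp.nsE S A, 2, SEUHelp.hmap S A, SEUHelp.gmap S A, SEUHelp.umap, p,
      h1, h2, h3⟩
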